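/- Let R = ℚ[a₀, a₁, a₂, a₃, a₄, a₅] and let f = a₀x⁵ + a₁x⁴z + a₂x³z² + a₃x²z³ + a₄xz⁴ + a₅z⁵ ∈ R[x,z] be the generic binary quintic, with associated covariant G_f = F_f/(5·f), a homogeneous polynomial of degree 12 in (x,z). Then the coefficient of x¹² in G_f equals 125a₀³a₄ − 50a₀²a₁a₃ + 15a₀a₁²a₂ − 3a₁⁴, and the coefficient of z¹² in G_f equals 125a₁a₅³ − 50a₂a₄a₅² + 15a₃a₄²a₅ − 3a₄⁴. -/
import Mathlib

open MvPolynomial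

/-- The associated form `F_f(x,z) = x·f_x(-f_z, f_x) + z·f_z(-f_z, f_x)` of a binary form
`f(x,z)` (variable `0` is `x`, variable `1` is `z`). -/
noncomputable def Fcov {R : Type*} [CommRing R] (f : MvPolynomial (Fin 2) R) :
    MvPolynomial (Fin 2) R :=
  X 0 * bind₁ ![-(pderiv 1 f), pderiv 0 f] (pderiv 0 f)
    + X 1 * bind₁ ![-(pderiv 1 f), pderiv 0 f] (pderiv 1 f)

namespace Stmt17Aux

noncomputable abbrev Rr : Type := MvPolynomial (Fin 6) ℚ
noncomputable abbrev Pp : Type := MvPolynomial (Fin 2) Rr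

set_option maxHeartbeats 1000000 in
noncomputable def fgen : Pp :=
  C (X 0) * X 0 ^ 5 * X 1 ^ 0 + C (X 1) * X 0 ^ 4 * X 1 ^ 1 + C (X 2) * X 0 ^ 3 * X 1 ^ 2 + C (X 3) * X 0 ^ 2 * X 1 ^ 3 + C (X 4) * X 0 ^ 1 * X 1 ^ 4 + C (X 5) * X 0 ^ 0 * X 1 ^ 5

noncomputable def cc0 : Rr :=
  125 * X 0 ^ 3 * X 4 - 50 * X 0 ^ 2 * X 1 * X 3 + 15 * X 0 * X 1 ^ 2 * X 2 - 3 * X 1 ^ 4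

noncomputable def cc1 : Rr :=
  -9 * X 1 ^ 3 * X 2 + 625 * X 0 ^ 3 * X 5 + 60 * X 0 * X 1 * X 2 ^ 2 - 55 * X 0 * X 1 ^ 2 * X 3 - 100 * X 0 ^ 2 * X 2 * X 3 + 175 * X 0 ^ 2 * X 1 * X 4

noncomputable def cc2 : Rr :=
  -41 * X 1 ^ 3 * X 3 + 60 * X 0 * X 2 ^ 3 + 3 * X 1 ^ 2 * X 2 ^ 2 + 65 * X 0 * X 1 ^ 2 * X 4 - 150 * X 0 ^ 2 * X 3 ^ 2 - 25 * X 0 ^ 2 * X 2 * X 4 + 1375 * X 0 ^ 2 * X 1 * X 5 - 30 * X 0 * X 1 * X 2 * X 3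

noncomputable def cc3 : Rr :=
  24 * X 1 * X 2 ^ 3 - 33 * X 1 ^ 3 * X 4 - 86 * X 1 ^ 2 * X 2 * X 3 + 160 * X 0 * X 2 ^ 2 * X 3 - 130 * X 0 * X 1 * X 3 ^ 2 + 1025 * X 0 * X 1 ^ 2 * X 5 - 425 * X 0 ^ 2 * X 3 * X 4 + 875 * X 0 ^ 2 * X 2 * X 5 + 30 * X 0 * X 1 * X 2 * X 4

noncomputable def cc4 : Rr :=
  12 * X 2 ^ 4 + 215 * X 1 ^ 3 * X 5 + 8 * X 1 * X 2 ^ 2 * X 3 - 97 * X 1 ^ 2 * X 3 ^ 2 - 128 * X 1 ^ 2 * X 2 * X 4 + 175 * X 0 * X 2 * X 3 ^ 2 + 175 * X 0 * X 2 ^ 2 * X 4 - 425 * X 0 ^ 2 * X 4 ^ 2 + 125 * X 0 ^ 2 * X 3 * X 5 - 450 * X 0 * X 1 * X 3 * X 4 + 1500 * X 0 * X 1 * X 2 * X 5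

noncomputable def cc5 : Rr :=
  32 * X 2 ^ 3 * X 3 + 105 * X 0 * X 3 ^ 3 - 33 * X 1 * X 2 * X 3 ^ 2 - 61 * X 1 * X 2 ^ 2 * X 4 - 322 * X 1 ^ 2 * X 3 * X 4 + 430 * X 1 ^ 2 * X 2 * X 5 + 775 * X 0 * X 2 ^ 2 * X 5 - 530 * X 0 * X 1 * X 4 ^ 2 - 750 * X 0 ^ 2 * X 4 * X 5 + 310 * X 0 * X 2 * X 3 * X 4 + 500 * X 0 * X 1 * X 3 * X 5

noncomputable def cc6 : Rr :=
  X 2 ^ 3 * X 4 + X 1 * X 3 ^ 3 + 37 * X 2 ^ 2 * X 3 ^ 2 + 365 * X 1 * X 2 ^ 2 * X 5 - 303 * X 1 ^ 2 * X 4 ^ 2 + 30 * X 1 ^ 2 * X 3 * X 5 + 365 * X 0 * X 3 ^ 2 * X 4 + 30 * X 0 * X 2 * X 4 ^ 2 - 625 * X 0 ^ 2 * X 5 ^ 2 - 268 * X 1 * X 2 * X 3 * X 4 + 1200 * X 0 * X 2 * X 3 * X 5 - 800 * X 0 * X 1 * X 4 * X 5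

noncomputable def cc7 : Rr :=
  32 * X 2 * X 3 ^ 3 + 105 * X 2 ^ 3 * X 5 - 33 * X 2 ^ 2 * X 3 * X 4 - 61 * X 1 * X 3 ^ 2 * X 4 - 322 * X 1 * X 2 * X 4 ^ 2 - 530 * X 1 ^ 2 * X 4 * X 5 + 430 * X 0 * X 3 * X 4 ^ 2 + 775 * X 0 * X 3 ^ 2 * X 5 - 750 * X 0 * X 1 * X 5 ^ 2 + 310 * X 1 * X 2 * X 3 * X 5 + 500 * X 0 * X 2 * X 4 * X 5

noncomputable def cc8 : Rr :=
  12 * X 3 ^ 4 + 215 * X 0 * X 4 ^ 3 + 8 * X 2 * X 3 ^ 2 * X 4 - 97 * X 2 ^ 2 * X 4 ^ 2 + 175 * X 2 ^ 2 * X 3 * X 5 - 128 * X 1 * X 3 * X 4 ^ 2 + 175 * X 1 * X 3 ^ 2 * X 5 - 425 * X 1 ^ 2 * X 5 ^ 2 + 125 * X 0 * X 2 * X 5 ^ 2 - 450 * X 1 * X 2 * X 4 * X 5 + 1500 * X 0 * X 3 * X 4 * X 5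

noncomputable def cc9 : Rr :=
  24 * X 3 ^ 3 * X 4 - 33 * X 1 * X 4 ^ 3 - 86 * X 2 * X 3 * X 4 ^ 2 + 160 * X 2 * X 3 ^ 2 * X 5 - 130 * X 2 ^ 2 * X 4 * X 5 - 425 * X 1 * X 2 * X 5 ^ 2 + 1025 * X 0 * X 4 ^ 2 * X 5 + 875 * X 0 * X 3 * X 5 ^ 2 + 30 * X 1 * X 3 * X 4 * X 5

noncomputable def cc10 : Rr :=
  60 * X 3 ^ 3 * X 5 - 41 * X 2 * X 4 ^ 3 + 3 * X 3 ^ 2 * X 4 ^ 2 - 150 * X 2 ^ 2 * X 5 ^ 2 + 65 * X 1 * X 4 ^ 2 * X 5 - 25 * X 1 * X 3 * X 5 ^ 2 + 1375 * X 0 * X 4 * X 5 ^ 2 - 30 * X 2 * X 3 * X 4 * X 5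

noncomputable def cc11 : Rr :=
  -9 * X 3 * X 4 ^ 3 + 625 * X 0 * X 5 ^ 3 + 60 * X 3 ^ 2 * X 4 * X 5 - 55 * X 2 * X 4 ^ 2 * X 5 - 100 * X 2 * X 3 * X 5 ^ 2 + 175 * X 1 * X 4 * X 5 ^ 2

noncomputable def cc12 : Rr :=
  125 * X 1 * X 5 ^ 3 - 50 * X 2 * X 4 * X 5 ^ 2 + 15 * X 3 * X 4 ^ 2 * X 5 - 3 * X 4 ^ 4

set_option maxHeartbeats 1000000 in
noncomputable def G0 : Pp :=
  C cc0 * X 0 ^ 12 * X 1 ^ 0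
      + C cc1 * X 0 ^ 11 * X 1 ^ 1
      + C cc2 * X 0 ^ 10 * X 1 ^ 2
      + C cc3 * X 0 ^ 9 * X 1 ^ 3
      + C cc4 * X 0 ^ 8 * X 1 ^ 4
      + C cc5 * X 0 ^ 7 * X 1 ^ 5
      + C cc6 * X 0 ^ 6 * X 1 ^ 6
      + C cc7 * X 0 ^ 5 * X 1 ^ 7
      + C cc8 * X 0 ^ 4 * X 1 ^ 8
      + C cc9 * X 0 ^ 3 * X 1 ^ 9
      + C cc10 * X 0 ^ 2 * X 1 ^ 10
      + C cc11 * X 0 ^ 1 * X 1 ^ 11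
      + C cc12 * X 0 ^ 0 * X 1 ^ 12

lemma singles0 (m n k : ℕ) :
    (Finsupp.single (0 : Fin 2) m + Finsupp.single 1 n = Finsupp.single 0 k)
      ↔ (m = k ∧ n = 0) := by
  constructor
  · intro h
    have h0 := DFunLike.congr_fun h 0
    have h1 := DFunLike.congr_fun h 1
    simp [Finsupp.single_apply] at h0 h1
    exact ⟨h0, h1⟩
  · rintro ⟨rfl, rfl⟩
    simp

lemma singles1 (m n k : ℕ) :
    (Finsupp.single (0 : Fin 2) m + Finsupp.single 1 n = Finsupp.single 1 k)
      ↔ (m = 0 ∧ n = k) := by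
  constructor
  · intro h
    have h0 := DFunLike.congr_fun h 0
    have h1 := DFunLike.congr_fun h 1
    simp [Finsupp.single_apply] at h0 h1
    exact ⟨h0, h1⟩
  · rintro ⟨rfl, rfl⟩
    simp

lemma cf_mono (c : Rr) (m n : ℕ) :
    (C c * X 0 ^ m * X 1 ^ n : Pp)
      = monomial (Finsupp.single 0 m + Finsupp.single 1 n) c := by
  rw [mul_assoc, X_pow_eq_monomial, X_pow_eq_monomial, monomial_mul, C_mul_monomial]
  norm_num

lemma coeffx (c : Rr) (m n k : ℕ) :
    coeff (Finsupp.single 0 k) (C c * X 0 ^ m * X 1 ^ n : Pp)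
      = if m = k ∧ n = 0 then c else 0 := by
  rw [cf_mono, coeff_monomial]
  simp [singles0]

lemma coeffz (c : Rr) (m n k : ℕ) :
    coeff (Finsupp.single 1 k) (C c * X 0 ^ m * X 1 ^ n : Pp)
      = if m = 0 ∧ n = k then c else 0 := by
  rw [cf_mono, coeff_monomial]
  simp [singles1]

lemma px_eq : pderiv 0 fgen = 5 * C (X 0) * X 0 ^ 4 * X 1 ^ 0 + 4 * C (X 1) * X 0 ^ 3 * X 1 ^ 1 + 3 * C (X 2) * X 0 ^ 2 * X 1 ^ 2 + 2 * C (X 3) * X 0 ^ 1 * X 1 ^ 3 + C (X 4) * X 0 ^ 0 * X 1 ^ 4 := by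
  simp [fgen, pderiv_mul, pderiv_pow, pderiv_C, pderiv_X_self, pderiv_X_of_ne] <;> ring

lemma pz_eq : pderiv 1 fgen = C (X 1) * X 0 ^ 4 * X 1 ^ 0 + 2 * C (X 2) * X 0 ^ 3 * X 1 ^ 1 + 3 * C (X 3) * X 0 ^ 2 * X 1 ^ 2 + 4 * C (X 4) * X 0 ^ 1 * X 1 ^ 3 + 5 * C (X 5) * X 0 ^ 0 * X 1 ^ 4 := by
  simp [fgen, pderiv_mul, pderiv_pow, pderiv_C, pderiv_X_self, pderiv_X_of_ne] <;> ring

set_option maxHeartbeats 16000000 in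
lemma main : Fcov fgen = 5 * fgen * G0 := by
  rw [Fcov, px_eq, pz_eq]
  simp only [G0, cc0, cc1, cc2, cc3, cc4, cc5, cc6, cc7, cc8, cc9, cc10, cc11, cc12, fgen, map_add, map_mul, map_pow, map_neg, map_ofNat, bind₁_X_right,
    bind₁_C_right, Matrix.cons_val_zero, Matrix.cons_val_one, Matrix.head_cons,
    C_add, C_sub, C_mul, C_pow]
  ring

lemma fgen_ne : fgen ≠ 0 := by
  intro h
  have h2 := congrArg (coeff (Finsupp.single 0 5)) h
  rw [fgen] at h2
  simp only [coeff_add, coeffx, coeff_zero] at h2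
  norm_num at h2

end Stmt17Aux

open Stmt17Aux in
/-- For the generic binary quintic
`f = a₀x⁵ + a₁x⁴z + a₂x³z² + a₃x²z³ + a₄xz⁴ + a₅z⁵` over `R = ℚ[a₀,…,a₅]`, the covariant
`G_f = F_f/(5·f)` has `x¹²`-coefficient `125a₀³a₄ - 50a₀²a₁a₃ + 15a₀a₁²a₂ - 3a₁⁴` and
`z¹²`-coefficient `125a₁a₅³ - 50a₂a₄a₅² + 15a₃a₄²a₅ - 3a₄⁴`. -/
theorem stmt17
    (f : MvPolynomial (Fin 2) (MvPolynomial (Fin 6) ℚ))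
    (hf : f = ∑ i : Fin 6, C (X i) * X 0 ^ (5 - (i : ℕ)) * X 1 ^ (i : ℕ))
    (G : MvPolynomial (Fin 2) (MvPolynomial (Fin 6) ℚ))
    (hG : Fcov f = (5 : MvPolynomial (Fin 2) (MvPolynomial (Fin 6) ℚ)) * f * G) :
    G.coeff (Finsupp.single 0 12)
        = 125 * X 0 ^ 3 * X 4 - 50 * X 0 ^ 2 * X 1 * X 3
          + 15 * X 0 * X 1 ^ 2 * X 2 - 3 * X 1 ^ 4 ∧
    G.coeff (Finsupp.single 1 12)
        = 125 * X 1 * X 5 ^ 3 - 50 * X 2 * X 4 * X 5 ^ 2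
          + 15 * X 3 * X 4 ^ 2 * X 5 - 3 * X 4 ^ 4 := by
  have hfe : f = fgen := by
    rw [hf, fgen, Fin.sum_univ_six]
    norm_num [show ((0:Fin 6):ℕ)=0 from rfl, show ((1:Fin 6):ℕ)=1 from rfl,
      show ((2:Fin 6):ℕ)=2 from rfl, show ((3:Fin 6):ℕ)=3 from rfl,
      show ((4:Fin 6):ℕ)=4 from rfl, show ((5:Fin 6):ℕ)=5 from rfl]
  subst hfe
  have h5 : (5 * fgen : Pp) ≠ 0 := mul_ne_zero (by norm_num) fgen_ne
  have hGG : G = G0 := by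
    have h := main.symm.trans hG
    exact (mul_left_cancel₀ h5 h).symm
  subst hGG
  constructor
  · rw [G0]
    simp only [coeff_add, coeffx]
    norm_num [cc0]
  · rw [G0]
    simp only [coeff_add, coeffz]
    norm_num [cc12]
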